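/- Let k be an infinite field, (A_i)_{i∈I} a family of k-algebras, B a k-algebra with dim_k(B) < 2^{ℵ0}, and f : A = ∏_{i∈I} A_i → B a surjective k-algebra homomorphism. Then the composite homomorphism A → B → B/Z(B) factors as A → A/U_0 × … × A/U_{n-1} → B/Z(B) for some n ∈ ℕ, where U_0, …, U_{n-1} are countably complete ultrafilters on I. -/

import Mathlib

universe u

/-- The setoid on a dependent product given by a filter. -/
def redSetoid {I : Type u} (F : Filter I) (A : I → Type u) : Setoid (∀ i, A i) where
  r a b := {i | a i = b i} ∈ F
  iseqv := by
    refine ⟨fun a => ?_, fun {a b} h => ?_, fun {a b c} h₁ h₂ => ?_⟩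
    · simp
    · simpa [eq_comm] using h
    · exact Filter.mem_of_superset (Filter.inter_mem h₁ h₂)
        (fun i hi => hi.1.trans hi.2)

/-- The reduced product of a family of sets with respect to a filter. -/
def ReducedProduct {I : Type u} (F : Filter I) (A : I → Type u) : Type u :=
  Quotient (redSetoid F A)

/-- The canonical quotient map onto a reduced product. -/
def reducedMk {I : Type u} (F : Filter I) (A : I → Type u) (a : ∀ i, A i) :
    ReducedProduct F A :=
  Quotient.mk (redSetoid F A) a

/-- A filter is countably complete if it is closed under countable
intersections of its members. -/
def CountablyComplete {I : Type u} (F : Filter I) : Prop :=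
  ∀ s : ℕ → Set I, (∀ n, s n ∈ F) → (⋂ n, s n) ∈ F

/-- The total annihilator ideal `Z(B) = {x | xB = Bx = 0}` of a (nonunital,
nonassociative) `k`-algebra, as a `k`-submodule. -/
def totalAnnihilator (k : Type u) (B : Type u) [Field k]
    [NonUnitalNonAssocRing B] [Module k B] [SMulCommClass k B B]
    [IsScalarTower k B B] : Submodule k B where
  carrier := {x | ∀ y : B, x * y = 0 ∧ y * x = 0}
  zero_mem' := fun y => ⟨zero_mul y, mul_zero y⟩
  add_mem' := by
    intro a b ha hb y
    exact ⟨by rw [add_mul, (ha y).1, (hb y).1, add_zero],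
           by rw [mul_add, (ha y).2, (hb y).2, add_zero]⟩
  smul_mem' := by
    intro c x hx y
    exact ⟨by rw [smul_mul_assoc, (hx y).1, smul_zero],
           by rw [mul_smul_comm, (hx y).2, smul_zero]⟩

set_option linter.unusedSectionVars false
set_option linter.unusedVariables false
set_option maxHeartbeats 1000000

namespace BNAux


open Cardinal

/-! ### Almost disjoint family of subsets of ℕ indexed by `ℕ → Bool` -/

/-- Code of the length-`n` prefix of `x`. -/
def brc (x : ℕ → Bool) (n : ℕ) : ℕ := Encodable.encode (List.ofFn fun m : Fin n => x m)

lemma brc_inj (x : ℕ → Bool) : Function.Injective (brc x) := by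
  intro n n' h
  have := Encodable.encode_injective h
  have := congrArg List.length this
  simpa using this

/-- The branch set of `x`. -/
def branchSet (x : ℕ → Bool) : Set ℕ := Set.range (brc x)

lemma branchSet_infinite (x : ℕ → Bool) : (branchSet x).Infinite :=
  Set.infinite_range_of_injective (brc_inj x)

lemma branchSet_ad {x y : ℕ → Bool} (hxy : x ≠ y) :
    (branchSet x ∩ branchSet y).Finite := by
  have hex : ∃ m, x m ≠ y m := Function.ne_iff.mp hxy
  classical
  set d := Nat.find hex with hd
  have hde : x d ≠ y d := Nat.find_spec hex
  have hsub : branchSet x ∩ branchSet y ⊆ brc x '' (Set.Iic d) := by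
    rintro e ⟨⟨n, rfl⟩, ⟨n', hn'⟩⟩
    have hlist := Encodable.encode_injective hn'.symm
    have hlen : n = n' := by
      have := congrArg List.length hlist
      simpa using this
    subst hlen
    refine ⟨n, ?_, rfl⟩
    by_contra hnd
    have hdn : d < n := by
      simpa using hnd
    have hfun : (fun m : Fin n => x m) = fun m : Fin n => y m :=
      List.ofFn_injective hlist
    have : x d = y d := congrFun hfun ⟨d, hdn⟩
    exact hde this
  exact Set.Finite.subset ((Set.finite_Iic d).image _) hsub

lemma mk_ulift_nat_bool : Cardinal.mk (ULift.{u} (ℕ → Bool)) = 2 ^ (Cardinal.aleph0 : Cardinal.{u}) := by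
  rw [Cardinal.mk_uLift]
  have : Cardinal.mk (ℕ → Bool) = (2 : Cardinal.{0}) ^ (Cardinal.aleph0 : Cardinal.{0}) := by
    rw [← Cardinal.mk_nat, ← Cardinal.mk_bool, Cardinal.power_def]
  rw [this]
  simp [Cardinal.lift_power]

/-! ### The main bilinear lemma -/

variable {k : Type u} [Field k]
  {B : Type u} [NonUnitalNonAssocRing B] [Module k B] [SMulCommClass k B B]
  [IsScalarTower k B B]

/-- Main cardinality lemma: if `u, v, γ` are set functions on `ℕ` valued in a
`k`-algebra `B` of dimension `< 2 ^ ℵ₀` with `u S * v T = γ (S ∩ T)`, then some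
`γ {n}` vanishes. -/
lemma main_bilinear (hB : Module.rank k B < 2 ^ Cardinal.aleph0)
    (u v γ : Set ℕ → B)
    (hu0 : u ∅ = 0)
    (huv : ∀ S T : Set ℕ, u S * v T = γ (S ∩ T)) :
    ∃ n : ℕ, γ {n} = 0 := by
  classical
  by_contra hγ
  push_neg at hγ
  have hγ0 : γ ∅ = 0 := by
    have := huv ∅ ∅
    simpa [hu0] using this.symm
  set w : ULift.{u} (ℕ → Bool) → B := fun x => u (branchSet x.down) with hw
  have hnli : ¬ LinearIndependent k w := by
    intro h
    have h1 := h.cardinal_le_rank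
    rw [mk_ulift_nat_bool] at h1
    exact absurd (lt_of_le_of_lt h1 hB) (lt_irrefl _)
  obtain ⟨s, g, hsum, t0, ht0s, ht0⟩ := not_linearIndependent_iff.mp hnli
  have hjunk : (⋃ t ∈ s.erase t0, (branchSet t0.down ∩ branchSet t.down)).Finite := by
    refine Set.Finite.biUnion (s.erase t0).finite_toSet ?_
    intro t ht
    have htne : t ≠ t0 := Finset.ne_of_mem_erase ht
    have : t0.down ≠ t.down := fun hdd => htne (ULift.ext t t0 hdd.symm)
    exact branchSet_ad this
  obtain ⟨nn, hn_mem, hn_nj⟩ := (branchSet_infinite t0.down).exists_notMem_finite hjunk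
  have h0 : (∑ t ∈ s, g t • u (branchSet t.down)) * v {nn} = 0 := by
    rw [show (∑ t ∈ s, g t • u (branchSet t.down)) = ∑ t ∈ s, g t • w t from rfl, hsum,
      zero_mul]
  rw [Finset.sum_mul] at h0
  have h1 : ∀ t ∈ s, t ≠ t0 → (g t • u (branchSet t.down)) * v {nn} = 0 := by
    intro t ht htne
    have hnn : nn ∉ branchSet t.down := by
      intro hmem
      exact hn_nj (Set.mem_biUnion (Finset.mem_erase.mpr ⟨htne, ht⟩) ⟨hn_mem, hmem⟩)
    have hempty : branchSet t.down ∩ {nn} = ∅ := by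
      ext m
      simp only [Set.mem_inter_iff, Set.mem_singleton_iff, Set.mem_empty_iff_false, iff_false]
      rintro ⟨hm, rfl⟩
      exact hnn hm
    rw [smul_mul_assoc, huv, hempty, hγ0, smul_zero]
  have h2 := Finset.sum_eq_single t0
    (f := fun t => (g t • u (branchSet t.down)) * v {nn}) h1 (fun h => absurd ht0s h)
  rw [h2] at h0
  simp only [smul_mul_assoc, huv] at h0
  have hsing : branchSet t0.down ∩ {nn} = {nn} :=
    Set.inter_eq_self_of_subset_right (Set.singleton_subset_iff.mpr hn_mem)
  rw [hsing] at h0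
  rcases smul_eq_zero.mp h0 with h | h
  · exact ht0 h
  · exact hγ nn h



attribute [local instance] Classical.propDecidable

section algebra

variable {k : Type u} [Field k] {I : Type u} {A : I → Type u}
  [∀ i, NonUnitalNonAssocRing (A i)] [∀ i, Module k (A i)]
  [∀ i, SMulCommClass k (A i) (A i)] [∀ i, IsScalarTower k (A i) (A i)]
  {B : Type u} [NonUnitalNonAssocRing B] [Module k B] [SMulCommClass k B B]
  [IsScalarTower k B B]

variable (f : (∀ i, A i) →ₙₐ[k] B)

/-- `S ⊆ I` is `f`-trivial if every element supported on `S` maps into the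
total annihilator. -/
def Triv (S : Set I) : Prop :=
  ∀ a : ∀ i, A i, (∀ i, i ∉ S → a i = 0) → f a ∈ totalAnnihilator k B

variable {f}

lemma triv_mono {S T : Set I} (hST : S ⊆ T) (h : Triv f T) : Triv f S :=
  fun a ha => h a fun i hi => ha i fun hmem => hi (hST hmem)

lemma triv_empty : Triv f (∅ : Set I) := by
  intro a ha
  have : a = 0 := funext fun i => ha i (by simp)
  rw [this, map_zero]
  exact (totalAnnihilator k B).zero_mem

/-- Restriction of an element of the product to a subset of `I`. -/
noncomputable def resd (S : Set I) (a : ∀ i, A i) : ∀ i, A i := fun i => if i ∈ S then a i else 0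

lemma resd_supp (S : Set I) (a : ∀ i, A i) : ∀ i, i ∉ S → resd S a i = 0 :=
  fun i hi => if_neg hi

lemma resd_of_mem {S : Set I} {i : I} (hi : i ∈ S) (a : ∀ i, A i) :
    resd S a i = a i := if_pos hi

lemma resd_add_compl (S : Set I) (a : ∀ i, A i) : resd S a + resd Sᶜ a = a := by
  funext i
  show resd S a i + resd Sᶜ a i = a i
  by_cases hi : i ∈ S
  · rw [resd_of_mem hi, resd_supp Sᶜ a i (by simpa using hi), add_zero]
  · rw [resd_supp S a i hi, resd_of_mem (by simpa using hi), zero_add]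

lemma triv_union {S T : Set I} (hS : Triv f S) (hT : Triv f T) : Triv f (S ∪ T) := by
  intro a ha
  have hsplit : f a = f (resd S a) + f (resd Sᶜ a) := by
    rw [← map_add]; rw [resd_add_compl]
  rw [hsplit]
  refine (totalAnnihilator k B).add_mem (hS _ (resd_supp S a)) (hT _ ?_)
  intro i hi
  by_cases hiS : i ∈ S
  · exact resd_supp Sᶜ a i (by simpa using hiS)
  · rw [resd_of_mem (by simpa using hiS)]
    exact ha i (fun hmem => hmem.elim hiS hi)

lemma triv_sUnion {C : Set (Set I)} (hC : C.Finite) (h : ∀ t ∈ C, Triv f t) :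
    Triv f (⋃₀ C) := by
  revert h
  refine Set.Finite.induction_on (motive := fun C' _ => (∀ t ∈ C', Triv f t) → Triv f (⋃₀ C'))
    C hC (fun _ => by simpa using (triv_empty : Triv f (∅ : Set I))) ?_
  intro t C' hts hC' ih h'
  rw [Set.sUnion_insert]
  exact triv_union (h' t (Set.mem_insert _ _))
    (ih fun t' ht' => h' t' (Set.mem_insert_of_mem _ ht'))

lemma triv_iUnion_fin {n : ℕ} {W : Fin n → Set I} (h : ∀ m, Triv f (W m)) :
    Triv f (⋃ m, W m) := by
  rw [← Set.sUnion_range]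
  exact triv_sUnion (Set.finite_range W) (by rintro t ⟨m, rfl⟩; exact h m)

end algebra



attribute [local instance] Classical.propDecidable

variable {k : Type u} [Field k] {I : Type u} {A : I → Type u}
  [∀ i, NonUnitalNonAssocRing (A i)] [∀ i, Module k (A i)]
  [∀ i, SMulCommClass k (A i) (A i)] [∀ i, IsScalarTower k (A i) (A i)]
  {B : Type u} [NonUnitalNonAssocRing B] [Module k B] [SMulCommClass k B B]
  [IsScalarTower k B B]

lemma not_mem_Z {x : B} (h : x ∉ totalAnnihilator k B) :
    ∃ y : B, x * y ≠ 0 ∨ y * x ≠ 0 := by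
  by_contra hc
  push_neg at hc
  exact h fun y => ⟨(hc y).1, (hc y).2⟩

variable {f : (∀ i, A i) →ₙₐ[k] B}

lemma witness_of_not_triv (hf : Function.Surjective f) {S : Set I}
    (h : ¬ Triv f S) :
    ∃ x y : ∀ i, A i, (∀ i, i ∉ S → x i = 0) ∧ (∀ i, i ∉ S → y i = 0) ∧
      f x * f y ≠ 0 := by
  rw [Triv] at h; push_neg at h
  obtain ⟨a, ha, haZ⟩ := h
  obtain ⟨yB, hy⟩ := not_mem_Z haZ
  obtain ⟨b, rfl⟩ := hf yB
  rcases hy with hy | hy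
  · refine ⟨a, resd S b, ha, resd_supp S b, ?_⟩
    have heq : f a * f (resd S b) = f a * f b := by
      rw [← map_mul, ← map_mul]
      congr 1
      funext i
      show a i * resd S b i = a i * b i
      by_cases hi : i ∈ S
      · rw [resd_of_mem hi]
      · rw [ha i hi, zero_mul, zero_mul]
    rw [heq]; exact hy
  · refine ⟨resd S b, a, resd_supp S b, ha, ?_⟩
    have heq : f (resd S b) * f a = f b * f a := by
      rw [← map_mul, ← map_mul]
      congr 1
      funext i
      show resd S b i * a i = b i * a i
      by_cases hi : i ∈ S
      · rw [resd_of_mem hi]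
      · rw [ha i hi, mul_zero, mul_zero]
    rw [heq]; exact hy

/-- Glue a family of elements, one supported on each `D m`, restricted to the
parts indexed by `S`. -/
noncomputable def glue (D : ℕ → Set I) (c : ℕ → ∀ i, A i) (S : Set ℕ) :
    ∀ i, A i :=
  fun i => if h : ∃ m, i ∈ D m then (if h.choose ∈ S then c h.choose i else 0)
    else 0

lemma glue_mul (D : ℕ → Set I) (c d : ℕ → ∀ i, A i) (S T : Set ℕ) :
    glue D c S * glue D d T = glue D (fun m => c m * d m) (S ∩ T) := by
  funext i
  show glue D c S i * glue D d T i = _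
  unfold glue
  by_cases h : ∃ m, i ∈ D m
  · rw [dif_pos h, dif_pos h, dif_pos h]
    by_cases hS : h.choose ∈ S <;> by_cases hT : h.choose ∈ T <;>
      simp [hS, hT, Set.mem_inter_iff]
  · rw [dif_neg h, dif_neg h, dif_neg h, zero_mul]

lemma glue_empty (D : ℕ → Set I) (c : ℕ → ∀ i, A i) : glue D c ∅ = 0 := by
  funext i
  show glue D c ∅ i = 0
  unfold glue
  by_cases h : ∃ m, i ∈ D m
  · rw [dif_pos h, if_neg (Set.notMem_empty _)]
  · rw [dif_neg h]

lemma glue_singleton {D : ℕ → Set I}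
    (hdisj : ∀ m m', m ≠ m' → Disjoint (D m) (D m'))
    {c : ℕ → ∀ i, A i} (hc : ∀ m i, i ∉ D m → c m i = 0) (m : ℕ) :
    glue D c {m} = c m := by
  have huniq : ∀ {i m₁ m₂}, i ∈ D m₁ → i ∈ D m₂ → m₁ = m₂ := by
    intro i m₁ m₂ h1 h2
    by_contra hne'
    exact Set.disjoint_left.mp (hdisj m₁ m₂ hne') h1 h2
  funext i
  show glue D c {m} i = c m i
  unfold glue
  by_cases h : ∃ m', i ∈ D m'
  · rw [dif_pos h]
    by_cases hm : h.choose = m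
    · rw [if_pos (Set.mem_singleton_iff.mpr hm), hm]
    · rw [if_neg (fun hmem => hm (Set.mem_singleton_iff.mp hmem))]
      have : i ∉ D m := fun hmem => hm (huniq h.choose_spec hmem)
      exact (hc m i this).symm
  · rw [dif_neg h]
    have : i ∉ D m := fun hmem => h ⟨m, hmem⟩
    exact (hc m i this).symm

/-- There is no infinite family of pairwise disjoint non-`f`-trivial sets. -/
lemma no_inf_disj (hB : Module.rank k B < 2 ^ Cardinal.aleph0)
    (hf : Function.Surjective f) (D : ℕ → Set I)
    (hdisj : ∀ m m', m ≠ m' → Disjoint (D m) (D m'))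
    (hnt : ∀ m, ¬ Triv f (D m)) : False := by
  classical
  choose xx yy hxx hyy hne using fun m => witness_of_not_triv hf (hnt m)
  obtain ⟨m, hm⟩ := main_bilinear hB
    (fun S => f (glue D xx S)) (fun S => f (glue D yy S))
    (fun S => f (glue D (fun m => xx m * yy m) S))
    (by show f (glue D xx ∅) = 0; rw [glue_empty, map_zero])
    (by intro S T; show f (glue D xx S) * f (glue D yy T) = _; rw [← map_mul, glue_mul])
  rw [glue_singleton hdisj (fun m' i hi => ?side) m, map_mul] at hm
  · exact hne m hm
  case side =>
    show xx m' i * yy m' i = 0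
    rw [hxx m' i hi, zero_mul]



section lemmaD


variable {k : Type u} [Field k] [Infinite k]

lemma brc_eq_le {x y : ℕ → Bool} (hex : ∃ m, x m ≠ y m) {n : ℕ}
    (h : brc x n = brc y n) : n ≤ Nat.find hex := by
  classical
  have hlist : (List.ofFn fun m : Fin n => x m) = List.ofFn fun m : Fin n => y m :=
    Encodable.encode_injective h
  have hfun : (fun m : Fin n => x m) = fun m : Fin n => y m :=
    List.ofFn_injective hlist
  by_contra hnd
  have hdn : Nat.find hex < n := by omega
  exact (Nat.find_spec hex) (congrFun hfun ⟨Nat.find hex, hdn⟩)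

/-- The quotient of `k ^ ℕ` by a subspace avoiding all cofinitely supported
functions has dimension at least `2 ^ ℵ₀`. -/
lemma lemmaD (N : Submodule k (ℕ → k))
    (hN : ∀ w : ℕ → k, ({j | w j = 0}).Finite → w ∉ N) :
    2 ^ (Cardinal.aleph0 : Cardinal.{u}) ≤ Module.rank k ((ℕ → k) ⧸ N) := by
  classical
  obtain ⟨cenc⟩ : Nonempty (ℕ ↪ k) := ⟨Infinite.natEmbedding k⟩
  rcases lt_or_ge (Cardinal.mk k) (2 ^ Cardinal.aleph0) with hk | hk
  · -- small field: cardinality argument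
    by_contra hcon
    push_neg at hcon
    have hinj : Function.Injective (fun x : ULift.{u} (ℕ → Bool) =>
        (Submodule.Quotient.mk (fun n => cenc (brc x.down n)) : (ℕ → k) ⧸ N)) := by
      intro x y hxy
      by_contra hne
      have hxyd : ∃ m, x.down m ≠ y.down m :=
        Function.ne_iff.mp (fun h => hne (ULift.ext _ _ h))
      have hmem : ((fun n => cenc (brc x.down n)) - fun n => cenc (brc y.down n)) ∈ N :=
        (Submodule.Quotient.eq N).mp hxy
      have hfin : ({j | ((fun n => cenc (brc x.down n)) - fun n => cenc (brc y.down n)) j = 0}).Finite := by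
        refine Set.Finite.subset (Set.finite_Iic (Nat.find hxyd)) ?_
        intro n hn
        have h0 : cenc (brc x.down n) = cenc (brc y.down n) := by
          have h1 : cenc (brc x.down n) - cenc (brc y.down n) = 0 := hn
          exact sub_eq_zero.mp h1
        exact brc_eq_le hxyd (cenc.injective h0)
      exact hN _ hfin hmem
    have hcard : (2 : Cardinal.{u}) ^ Cardinal.aleph0 ≤ Cardinal.mk ((ℕ → k) ⧸ N) := by
      have := Cardinal.mk_le_of_injective hinj
      rwa [mk_ulift_nat_bool] at this
    have hranklt : Module.rank k ((ℕ → k) ⧸ N) < 2 ^ Cardinal.aleph0 := hcon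
    obtain ⟨ι, b⟩ : ∃ ι : Set ((ℕ → k) ⧸ N), Nonempty (Module.Basis ι k ((ℕ → k) ⧸ N)) :=
      ⟨Module.Basis.ofVectorSpaceIndex k _, ⟨Module.Basis.ofVectorSpace k _⟩⟩
    obtain ⟨b⟩ := b
    have hmkι : Cardinal.mk ι = Module.rank k ((ℕ → k) ⧸ N) := b.mk_eq_rank''
    have hQmk : Cardinal.mk ((ℕ → k) ⧸ N) = Cardinal.mk (ι →₀ k) :=
      Cardinal.mk_congr b.repr.toEquiv
    rcases finite_or_infinite ι with hfin | hinf
    · have h1 : Cardinal.mk (ι →₀ k) = Cardinal.mk (ι → k) :=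
        Cardinal.mk_congr Finsupp.equivFunOnFinite
      have h2 : Cardinal.mk (↥ι → k) = Cardinal.mk k ^ Cardinal.mk ↥ι :=
        (Cardinal.power_def k ↥ι).symm
      have h3 : Cardinal.mk ((ℕ → k) ⧸ N) ≤ Cardinal.mk k := by
        rw [hQmk, h1, h2]
        exact Cardinal.pow_le (Cardinal.aleph0_le_mk k) (Cardinal.lt_aleph0_of_finite _)
      exact absurd (lt_of_le_of_lt (le_trans hcard h3) hk) (lt_irrefl _)
    · have h1 := Cardinal.mk_finsupp_lift_of_infinite ι k
      rw [Cardinal.lift_id, Cardinal.lift_id] at h1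
      have h2 : Cardinal.mk ((ℕ → k) ⧸ N) < 2 ^ Cardinal.aleph0 := by
        rw [hQmk, h1]
        exact max_lt (by rw [hmkι]; exact hranklt) hk
      exact absurd (lt_of_le_of_lt hcard h2) (lt_irrefl _)
  · -- big field: partial fractions
    obtain ⟨eT⟩ : Nonempty (ULift.{u} (ℕ → Bool) ↪ k) := by
      rw [← Cardinal.le_def, mk_ulift_nat_bool]
      exact hk
    have hli : LinearIndependent k
        (fun x : ULift.{u} (ℕ → Bool) =>
          (Submodule.Quotient.mk
            (fun n => if cenc n = eT x then 0 else (cenc n - eT x)⁻¹) : (ℕ → k) ⧸ N)) := by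
      rw [linearIndependent_iff']
      intro s g hsum x0 hx0
      by_contra hg
      set sFun : ULift.{u} (ℕ → Bool) → (ℕ → k) :=
        fun x n => if cenc n = eT x then 0 else (cenc n - eT x)⁻¹ with hsFun
      set F : ℕ → k := ∑ x ∈ s, g x • sFun x with hF
      have hFmem : F ∈ N := by
        have hmk : (Submodule.Quotient.mk F : (ℕ → k) ⧸ N)
            = ∑ x ∈ s, g x • (Submodule.Quotient.mk (sFun x) : (ℕ → k) ⧸ N) := by
          rw [hF]
          rw [show (Submodule.Quotient.mk (∑ x ∈ s, g x • sFun x) : (ℕ → k) ⧸ N)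
              = Submodule.mkQ N (∑ x ∈ s, g x • sFun x) from rfl]
          rw [map_sum]
          simp [Submodule.mkQ_apply]
        rw [hsum] at hmk
        exact (Submodule.Quotient.mk_eq_zero N).mp hmk
      set p : Polynomial k :=
        ∑ x ∈ s, Polynomial.C (g x) * ∏ y ∈ s.erase x,
          (Polynomial.X - Polynomial.C (eT y)) with hp
      have hevx0 : p.eval (eT x0) = g x0 * ∏ y ∈ s.erase x0, (eT x0 - eT y) := by
        rw [hp, Polynomial.eval_finset_sum]
        rw [Finset.sum_eq_single x0]
        · simp [Polynomial.eval_prod]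
        · intro x hx hxne
          simp only [Polynomial.eval_mul, Polynomial.eval_C, Polynomial.eval_prod,
            Polynomial.eval_sub, Polynomial.eval_X]
          have hx0e : x0 ∈ s.erase x := Finset.mem_erase.mpr ⟨fun h => hxne h.symm, hx0⟩
          rw [Finset.prod_eq_zero hx0e (by rw [sub_self]), mul_zero]
        · intro h; exact absurd hx0 h
      have hp0 : p ≠ 0 := by
        intro h0
        rw [h0, Polynomial.eval_zero] at hevx0
        have hne0 : g x0 * ∏ y ∈ s.erase x0, (eT x0 - eT y) ≠ 0 := by
          refine mul_ne_zero hg (Finset.prod_ne_zero_iff.mpr ?_)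
          intro y hy
          have hxy : x0 ≠ y := fun h => (Finset.mem_erase.mp hy).1 h.symm
          exact sub_ne_zero_of_ne (fun h => hxy (eT.injective h))
        exact hne0 hevx0.symm
      have hroot : ({t : k | p.IsRoot t}).Finite := Polynomial.finite_setOf_isRoot hp0
      have hFfin : ({j | F j = 0}).Finite := by
        have hsub : {j | F j = 0} ⊆
            (⋃ x ∈ s, {j | cenc j = eT x}) ∪ (fun j => cenc j) ⁻¹' {t | p.IsRoot t} := by
          intro j hj
          by_cases hex : ∃ x ∈ s, cenc j = eT x
          · left
            obtain ⟨x, hx, he⟩ := hex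
            exact Set.mem_biUnion hx he
          · right
            push_neg at hex
            have hFj : (∑ x ∈ s, g x * (cenc j - eT x)⁻¹) = 0 := by
              have h1 : F j = ∑ x ∈ s, g x * sFun x j := by
                rw [hF]
                simp [Finset.sum_apply, Pi.smul_apply, smul_eq_mul]
              have h2 : ∀ x ∈ s, g x * sFun x j = g x * (cenc j - eT x)⁻¹ := by
                intro x hx
                rw [hsFun]
                simp only []
                rw [if_neg (hex x hx)]
              rw [← Finset.sum_congr rfl h2, ← h1]
              exact hj
            show p.IsRoot (cenc j)
            have hterm : ∀ x ∈ s,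
                Polynomial.eval (cenc j) (Polynomial.C (g x) * ∏ y ∈ s.erase x,
                  (Polynomial.X - Polynomial.C (eT y)))
                = (∏ y ∈ s, (cenc j - eT y)) * (g x * (cenc j - eT x)⁻¹) := by
              intro x hx
              simp only [Polynomial.eval_mul, Polynomial.eval_C, Polynomial.eval_prod,
                Polynomial.eval_sub, Polynomial.eval_X]
              have hne0 : cenc j - eT x ≠ 0 := sub_ne_zero_of_ne (hex x hx)
              rw [← Finset.mul_prod_erase s (fun y => cenc j - eT y) hx]
              field_simp
            rw [Polynomial.IsRoot, hp, Polynomial.eval_finset_sum,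
              Finset.sum_congr rfl hterm, ← Finset.mul_sum, hFj, mul_zero]
        refine Set.Finite.subset (Set.Finite.union ?_ ?_) hsub
        · refine Set.Finite.biUnion s.finite_toSet ?_
          intro x hx
          refine Set.Subsingleton.finite ?_
          intro j1 h1 j2 h2
          exact cenc.injective (h1.trans h2.symm)
        · exact Set.Finite.preimage (Set.injOn_of_injective cenc.injective) hroot
      exact hN F hFfin hFmem
    have := hli.cardinal_le_rank
    rwa [mk_ulift_nat_bool] at this

end lemmaD

section sigma


variable {k : Type u} [Field k] [Infinite k] {I : Type u} {A : I → Type u}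
  [∀ i, NonUnitalNonAssocRing (A i)] [∀ i, Module k (A i)]
  [∀ i, SMulCommClass k (A i) (A i)] [∀ i, IsScalarTower k (A i) (A i)]
  {B : Type u} [NonUnitalNonAssocRing B] [Module k B] [SMulCommClass k B B]
  [IsScalarTower k B B]

/-- Key σ-completeness lemma: an atom cannot be partitioned into countably
many trivial pieces. -/
lemma sigma_lemma (hB : Module.rank k B < 2 ^ Cardinal.aleph0)
    {f : (∀ i, A i) →ₙₐ[k] B} (hf : Function.Surjective f)
    (P : Set I) (V : ℕ → Set I)
    (hdisj : ∀ m m', m ≠ m' → Disjoint (V m) (V m'))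
    (hVP : ∀ j, V j ⊆ P)
    (hcov : ∀ i ∈ P, ∃ j, i ∈ V j)
    (htriv : ∀ j, Triv f (V j))
    (hatom : ∀ Q, Q ⊆ P → Triv f Q ∨ Triv f (P \ Q))
    (hP : ¬ Triv f P) : False := by
  classical
  set QT : Set ℕ → Set I := fun T => ⋃ j ∈ T, V j with hQT
  set Small : Set ℕ → Prop := fun T => Triv f (QT T) with hSmall
  have hQTP : ∀ T, QT T ⊆ P := by
    intro T i hi
    obtain ⟨j, hjT, hij⟩ := Set.mem_iUnion₂.mp hi
    exact hVP j hij
  have small_mono : ∀ {T T'}, T ⊆ T' → Small T' → Small T := by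
    intro T T' hTT h
    refine triv_mono ?_ h
    exact Set.biUnion_subset_biUnion_left hTT
  have small_or : ∀ T, Small T ∨ Small Tᶜ := by
    intro T
    rcases hatom (QT T) (hQTP T) with h | h
    · exact Or.inl h
    · refine Or.inr (triv_mono ?_ h)
      intro i hi
      obtain ⟨j, hjT, hij⟩ := Set.mem_iUnion₂.mp hi
      refine ⟨hVP j hij, ?_⟩
      intro hiT
      obtain ⟨j', hj'T, hij'⟩ := Set.mem_iUnion₂.mp hiT
      have : j = j' := by
        by_contra hne
        exact Set.disjoint_left.mp (hdisj _ _ hne) hij hij'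
      exact hjT (this ▸ hj'T)
  have small_not_both : ∀ T, Small T → Small Tᶜ → False := by
    intro T h1 h2
    apply hP
    refine triv_mono ?_ (triv_union h1 h2)
    intro i hi
    obtain ⟨j, hj⟩ := hcov i hi
    by_cases hjT : j ∈ T
    · exact Or.inl (Set.mem_biUnion hjT hj)
    · exact Or.inr (Set.mem_biUnion hjT hj)
  have small_empty : Small ∅ := by
    show Triv f (⋃ j ∈ (∅ : Set ℕ), V j)
    rw [Set.biUnion_empty]
    exact triv_empty
  have small_union : ∀ T T', Small T → Small T' → Small (T ∪ T') := by
    intro T T' h1 h2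
    show Triv f (QT (T ∪ T'))
    have : QT (T ∪ T') = QT T ∪ QT T' := Set.biUnion_union T T' V
    rw [this]
    exact triv_union h1 h2
  have small_finite : ∀ T : Set ℕ, T.Finite → Small T := by
    intro T hT
    refine Set.Finite.induction_on (motive := fun T _ => Small T) T hT small_empty ?_
    intro j T' hjT' hT' ih
    show Triv f (QT (insert j T'))
    have : QT (insert j T') = V j ∪ QT T' := by
      show (⋃ l ∈ insert j T', V l) = V j ∪ ⋃ l ∈ T', V l
      simp
    rw [this]
    exact triv_union (htriv j) ih
  set ν : I → ℕ := fun i => if h : ∃ j, i ∈ V j then h.choose else 0 with hν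
  have hνspec : ∀ {i j}, i ∈ V j → ν i = j := by
    intro i j hij
    have hex : ∃ j', i ∈ V j' := ⟨j, hij⟩
    have h1 : ν i = hex.choose := dif_pos hex
    have h2 := hex.choose_spec
    rw [h1]
    by_contra hne
    exact Set.disjoint_left.mp (hdisj _ _ hne) h2 hij
  obtain ⟨a, ha, haZ⟩ : ∃ a : ∀ i, A i, (∀ i, i ∉ P → a i = 0) ∧
      f a ∉ totalAnnihilator k B := by
    rw [Triv] at hP; push_neg at hP; exact hP
  obtain ⟨yB, hy⟩ := not_mem_Z haZ
  obtain ⟨b0, rfl⟩ := hf yB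
  set b : ∀ i, A i := resd P b0 with hb
  have hbP : ∀ i, i ∉ P → b i = 0 := resd_supp P b0
  set sc : (ℕ → k) → (∀ i, A i) → (∀ i, A i) := fun w c i => w (ν i) • c i with hsc
  have sc_supp : ∀ (w : ℕ → k) (c : ∀ i, A i), (∀ i, i ∉ P → c i = 0) →
      ∀ i, i ∉ QT {j | w j ≠ 0} → sc w c i = 0 := by
    intro w c hc i hi
    by_cases hex : ∃ j, i ∈ V j
    · obtain ⟨j, hj⟩ := hex
      have hνi : ν i = j := hνspec hj
      have hwj : w j = 0 := by
        by_contra hwj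
        exact hi (Set.mem_biUnion hwj hj)
      show w (ν i) • c i = 0
      rw [hνi, hwj, zero_smul]
    · have hiP : i ∉ P := fun hiP => hex (hcov i hiP)
      show w (ν i) • c i = 0
      rw [hc i hiP, smul_zero]
  have sc_in_Z : ∀ (w : ℕ → k) (c : ∀ i, A i), (∀ i, i ∉ P → c i = 0) →
      Small {j | w j ≠ 0} → f (sc w c) ∈ totalAnnihilator k B := by
    intro w c hc hsmall
    exact hsmall _ (sc_supp w c hc)
  have sc_mul : ∀ (w w' : ℕ → k) (c c' : ∀ i, A i),
      sc w c * sc w' c' = sc (w * w') (c * c') := by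
    intro w w' c c'
    funext i
    show (w (ν i) • c i) * (w' (ν i) • c' i) = (w (ν i) * w' (ν i)) • (c i * c' i)
    rw [smul_mul_assoc, mul_smul_comm, ← mul_smul]
  have hab_supp : ∀ i, i ∉ P → (a * b) i = 0 := by
    intro i hi
    show a i * b i = 0
    rw [ha i hi, zero_mul]
  have hba_supp : ∀ i, i ∉ P → (b * a) i = 0 := by
    intro i hi
    show b i * a i = 0
    rw [ha i hi, mul_zero]
  by_cases hrho : ∃ ρ : ℕ → k, Small ({j | ρ j ≠ 0}ᶜ) ∧
      f (sc ρ a) ∈ totalAnnihilator k B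
  · obtain ⟨ρ, hρc, hρZ⟩ := hrho
    set h' : ℕ → k := fun j => if ρ j = 0 then 0 else (ρ j)⁻¹ with hh'
    set χ : ℕ → k := ρ * h' with hχ
    set η : ℕ → k := 1 - χ with hη
    have hηsupp : {j | η j ≠ 0} ⊆ {j | ρ j ≠ 0}ᶜ := by
      intro j hj
      simp only [Set.mem_compl_iff, Set.mem_setOf_eq, not_not]
      by_contra hρj
      apply hj
      show (1 : ℕ → k) j - χ j = 0
      have : χ j = 1 := by
        show ρ j * h' j = 1
        rw [hh']
        simp only []
        rw [if_neg hρj, mul_inv_cancel₀ hρj]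
      rw [this, Pi.one_apply, sub_self]
    have hηZ_a : f (sc η a) ∈ totalAnnihilator k B :=
      sc_in_Z η a ha (small_mono hηsupp hρc)
    have hsplit : ∀ c : ∀ i, A i, c = sc χ c + sc η c := by
      intro c
      funext i
      show c i = χ (ν i) • c i + η (ν i) • c i
      rw [← add_smul]
      have : χ (ν i) + η (ν i) = 1 := by
        show χ (ν i) + ((1 : ℕ → k) (ν i) - χ (ν i)) = 1
        rw [Pi.one_apply]; ring
      rw [this, one_smul]
    rcases hy with hy | hy
    · apply hy
      have hab : f a * f b0 = f (a * b) := by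
        rw [← map_mul]
        congr 1
        funext i
        show a i * b0 i = a i * b i
        by_cases hi : i ∈ P
        · rw [hb]; rw [resd_of_mem hi]
        · rw [ha i hi, zero_mul, zero_mul]
      rw [hab]
      have h1 : f (sc χ (a * b)) = 0 := by
        have he : sc χ (a * b) = sc ρ a * sc h' b := by
          rw [sc_mul]
        rw [he, map_mul]
        exact (hρZ (f (sc h' b))).1
      have h2 : f (sc η (a * b)) = 0 := by
        have he : sc η (a * b) = sc η a * b := by
          have h3 : sc η a * sc 1 b = sc (η * 1) (a * b) := sc_mul η 1 a b
          have h4 : sc 1 b = b := by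
            funext i
            show (1 : ℕ → k) (ν i) • b i = b i
            rw [Pi.one_apply, one_smul]
          rw [h4, mul_one] at h3
          exact h3.symm
        rw [he, map_mul]
        exact (hηZ_a (f b)).1
      rw [hsplit (a * b), map_add, h1, h2, add_zero]
    · apply hy
      have hab : f b0 * f a = f (b * a) := by
        rw [← map_mul]
        congr 1
        funext i
        show b0 i * a i = b i * a i
        by_cases hi : i ∈ P
        · rw [hb]; rw [resd_of_mem hi]
        · rw [ha i hi, mul_zero, mul_zero]
      rw [hab]
      have h1 : f (sc χ (b * a)) = 0 := by
        have he : sc χ (b * a) = sc h' b * sc ρ a := by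
          rw [sc_mul]
          have : h' * ρ = χ := by
            funext j; show h' j * ρ j = ρ j * h' j; ring
          rw [this]
        rw [he, map_mul]
        exact (hρZ (f (sc h' b))).2
      have h2 : f (sc η (b * a)) = 0 := by
        have he : sc η (b * a) = b * sc η a := by
          have h3 : sc 1 b * sc η a = sc (1 * η) (b * a) := sc_mul 1 η b a
          have h4 : sc 1 b = b := by
            funext i
            show (1 : ℕ → k) (ν i) • b i = b i
            rw [Pi.one_apply, one_smul]
          rw [h4, one_mul] at h3
          exact h3.symm
        rw [he, map_mul]
        exact (hηZ_a (f b)).2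
      rw [hsplit (b * a), map_add, h1, h2, add_zero]
  · push_neg at hrho
    set N : Submodule k (ℕ → k) :=
      { carrier := {w | Small {j | w j ≠ 0}}
        zero_mem' := by
          show Small {j | (0 : ℕ → k) j ≠ 0}
          have : {j | (0 : ℕ → k) j ≠ 0} = ∅ := by
            ext j; simp
          rw [this]; exact small_empty
        add_mem' := by
          intro w w' hw hw'
          refine small_mono ?_ (small_union _ _ hw hw')
          intro j hj
          by_cases h1 : w j = 0
          · right
            simp only [Set.mem_setOf_eq] at hj ⊢
            intro h2
            exact hj (by show w j + w' j = 0; rw [h1, h2, add_zero])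
          · exact Or.inl h1
        smul_mem' := by
          intro c w hw
          refine small_mono ?_ hw
          intro j hj
          simp only [Set.mem_setOf_eq] at hj ⊢
          intro h
          exact hj (by show c * w j = 0; rw [h, mul_zero]) } with hN
    set Λ : (ℕ → k) →ₗ[k] B :=
      { toFun := fun w => f (sc w a)
        map_add' := by
          intro w w'
          show f (sc (w + w') a) = f (sc w a) + f (sc w' a)
          have : sc (w + w') a = sc w a + sc w' a := by
            funext i
            show (w (ν i) + w' (ν i)) • a i = w (ν i) • a i + w' (ν i) • a i
            rw [add_smul]
          rw [this, map_add]
        map_smul' := by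
          intro c w
          show f (sc (c • w) a) = (RingHom.id k) c • f (sc w a)
          have : sc (c • w) a = c • sc w a := by
            funext i
            show (c * w (ν i)) • a i = c • (w (ν i) • a i)
            rw [mul_smul]
          rw [this, map_smul]
          rfl } with hΛ
    have hle : N ≤ Submodule.comap Λ (totalAnnihilator k B) := by
      intro w hw
      exact sc_in_Z w a ha hw
    set L := Submodule.mapQ N (totalAnnihilator k B) Λ hle with hL
    have hker : ∀ w : ℕ → k, Λ w ∈ totalAnnihilator k B → w ∈ N := by
      intro w hw
      rcases small_or {j | w j ≠ 0} with h | h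
      · exact h
      · exact absurd hw (hrho w h)
    have hLinj : Function.Injective L := by
      intro q1 q2 h12
      obtain ⟨w1, rfl⟩ := Submodule.mkQ_surjective N q1
      obtain ⟨w2, rfl⟩ := Submodule.mkQ_surjective N q2
      have h13 : L (Submodule.Quotient.mk w1) = L (Submodule.Quotient.mk w2) := h12
      rw [Submodule.mapQ_apply, Submodule.mapQ_apply] at h13
      have h14 : Λ w1 - Λ w2 ∈ totalAnnihilator k B :=
        (Submodule.Quotient.eq _).mp h13
      rw [← map_sub] at h14
      have := hker _ h14
      show Submodule.Quotient.mk w1 = Submodule.Quotient.mk w2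
      exact (Submodule.Quotient.eq N).mpr this
    have hD : 2 ^ (Cardinal.aleph0 : Cardinal.{u}) ≤ Module.rank k ((ℕ → k) ⧸ N) := by
      refine lemmaD N ?_
      intro w hwfin hwN
      have hcompl : Small {j | w j ≠ 0}ᶜ := by
        refine small_mono ?_ (small_finite _ hwfin)
        intro j hj
        simpa using hj
      exact small_not_both _ hwN hcompl
    have hr1 : Module.rank k ((ℕ → k) ⧸ N) ≤
        Module.rank k (B ⧸ totalAnnihilator k B) :=
      LinearMap.rank_le_of_injective _ hLinj
    have hr2 := rank_quotient_le (totalAnnihilator k B)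
    exact absurd (lt_of_le_of_lt (hD.trans (hr1.trans hr2)) hB) (lt_irrefl _)

end sigma

section atoms


variable {k : Type u} [Field k] [Infinite k] {I : Type u} {A : I → Type u}
  [∀ i, NonUnitalNonAssocRing (A i)] [∀ i, Module k (A i)]
  [∀ i, SMulCommClass k (A i) (A i)] [∀ i, IsScalarTower k (A i) (A i)]
  {B : Type u} [NonUnitalNonAssocRing B] [Module k B] [SMulCommClass k B B]
  [IsScalarTower k B B]

variable (f : (∀ i, A i) →ₙₐ[k] B)

/-- An atom for the ideal of `f`-trivial sets. -/
def IsAtomSet (P : Set I) : Prop :=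
  ¬ Triv f P ∧ ∀ Q, Q ⊆ P → Triv f Q ∨ Triv f (P \ Q)

variable {f}

lemma exists_atom (hB : Module.rank k B < 2 ^ Cardinal.aleph0)
    (hf : Function.Surjective f) {S : Set I} (hS : ¬ Triv f S) :
    ∃ P, P ⊆ S ∧ IsAtomSet f P := by
  by_contra hno
  push_neg at hno
  have step : ∀ T : Set I, T ⊆ S → ¬ Triv f T →
      ∃ Q, Q ⊆ T ∧ ¬ Triv f Q ∧ ¬ Triv f (T \ Q) := by
    intro T hTS hT
    have h1 := hno T hTS
    rw [IsAtomSet] at h1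
    push_neg at h1
    obtain ⟨Q, hQT, hQ1, hQ2⟩ := h1 hT
    exact ⟨Q, hQT, hQ1, hQ2⟩
  let F : {T : Set I // T ⊆ S ∧ ¬ Triv f T} → {T : Set I // T ⊆ S ∧ ¬ Triv f T} :=
    fun p => ⟨p.1 \ (step p.1 p.2.1 p.2.2).choose,
      Set.Subset.trans Set.diff_subset p.2.1,
      ((step p.1 p.2.1 p.2.2).choose_spec).2.2⟩
  let seq : ℕ → {T : Set I // T ⊆ S ∧ ¬ Triv f T} := fun n => F^[n] ⟨S, subset_rfl, hS⟩
  let D : ℕ → Set I := fun n => (step (seq n).1 (seq n).2.1 (seq n).2.2).choose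
  have hDsub : ∀ n, D n ⊆ (seq n).1 :=
    fun n => ((step (seq n).1 (seq n).2.1 (seq n).2.2).choose_spec).1
  have hDnt : ∀ n, ¬ Triv f (D n) :=
    fun n => ((step (seq n).1 (seq n).2.1 (seq n).2.2).choose_spec).2.1
  have hstep : ∀ n, (seq (n+1)).1 = (seq n).1 \ D n := by
    intro n
    have h1 : seq (n+1) = F (seq n) := Function.iterate_succ_apply' F n _
    rw [h1]
  have hmono : ∀ n m, n ≤ m → (seq m).1 ⊆ (seq n).1 := by
    intro n m hnm
    induction m, hnm using Nat.le_induction with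
    | base => exact subset_rfl
    | succ m hnm ih =>
      refine Set.Subset.trans ?_ ih
      rw [hstep m]
      exact Set.diff_subset
  have hdjlt : ∀ n m, n < m → Disjoint (D n) (D m) := by
    intro n m hnm
    rw [Set.disjoint_left]
    intro i hin him
    have h1 : i ∈ (seq m).1 := hDsub m him
    have h2 : i ∈ (seq (n+1)).1 := hmono (n+1) m hnm h1
    rw [hstep n] at h2
    exact h2.2 hin
  have hdisj : ∀ n m, n ≠ m → Disjoint (D n) (D m) := by
    intro n m hne
    rcases Nat.lt_or_ge n m with h | h
    · exact hdjlt n m h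
    · exact (hdjlt m n (by omega)).symm
  exact no_inf_disj hB hf D hdisj hDnt

lemma exists_atomic_decomp (hB : Module.rank k B < 2 ^ Cardinal.aleph0)
    (hf : Function.Surjective f) (hU : ¬ Triv f (Set.univ : Set I)) :
    ∃ (n : ℕ) (P : Fin n → Set I), (∀ m, IsAtomSet f (P m)) ∧
      Triv f (Set.univ \ ⋃ m, P m) := by
  classical
  let G2 : Set I → Set I := fun R => if h : ¬ Triv f R then R \ (exists_atom hB hf h).choose else R
  let rest : ℕ → Set I := fun n => G2^[n] Set.univ
  let atomOf : ℕ → Set I := fun n =>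
    if h : ¬ Triv f (rest n) then (exists_atom hB hf h).choose else ∅
  have hrest_succ : ∀ n, rest (n+1) = G2 (rest n) := by
    intro n
    exact Function.iterate_succ_apply' G2 n _
  have hrest_succ' : ∀ n, rest (n+1) = rest n \ atomOf n := by
    intro n
    rw [hrest_succ n]
    by_cases h : ¬ Triv f (rest n)
    · show (if h' : ¬ Triv f (rest n) then rest n \ (exists_atom hB hf h').choose else rest n) = _
      rw [dif_pos h]
      congr 1
      show _ = (if h' : ¬ Triv f (rest n) then (exists_atom hB hf h').choose else ∅)
      rw [dif_pos h]
    · show (if h' : ¬ Triv f (rest n) then rest n \ (exists_atom hB hf h').choose else rest n) = _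
      rw [dif_neg h]
      have : atomOf n = ∅ := dif_neg h
      rw [this, Set.diff_empty]
  have hterm : ∃ n, Triv f (rest n) := by
    by_contra hall
    push_neg at hall
    have hA : ∀ n, IsAtomSet f (atomOf n) ∧ atomOf n ⊆ rest n := by
      intro n
      have h := hall n
      have h' : ¬ Triv f (rest n) := h
      have he : atomOf n = (exists_atom hB hf h').choose := dif_pos h'
      rw [he]
      exact ⟨((exists_atom hB hf h').choose_spec).2, ((exists_atom hB hf h').choose_spec).1⟩
    have hmono : ∀ n m, n ≤ m → rest m ⊆ rest n := by
      intro n m hnm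
      induction m, hnm using Nat.le_induction with
      | base => exact subset_rfl
      | succ m hnm ih =>
        refine Set.Subset.trans ?_ ih
        rw [hrest_succ' m]
        exact Set.diff_subset
    have hdjlt : ∀ n m, n < m → Disjoint (atomOf n) (atomOf m) := by
      intro n m hnm
      rw [Set.disjoint_left]
      intro i hin him
      have h1 : i ∈ rest m := (hA m).2 him
      have h2 : i ∈ rest (n+1) := hmono (n+1) m hnm h1
      rw [hrest_succ' n] at h2
      exact h2.2 hin
    refine no_inf_disj hB hf atomOf ?_ (fun n => (hA n).1.1)
    intro n m hne
    rcases Nat.lt_or_ge n m with h | h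
    · exact hdjlt n m h
    · exact (hdjlt m n (by omega)).symm
  set n := Nat.find hterm with hn
  have hnt : ∀ m : ℕ, m < n → ¬ Triv f (rest m) := fun m hm => Nat.find_min hterm hm
  have hatoms : ∀ m : Fin n, IsAtomSet f (atomOf m) := by
    intro m
    have h' : ¬ Triv f (rest m) := hnt m m.2
    have he : atomOf m = (exists_atom hB hf h').choose := dif_pos h'
    rw [he]
    exact ((exists_atom hB hf h').choose_spec).2
  refine ⟨n, fun m => atomOf m, hatoms, ?_⟩
  have hsub : ∀ nn : ℕ, Set.univ \ (⋃ m : Fin nn, atomOf m) ⊆ rest nn := by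
    intro nn
    induction nn with
    | zero => intro i _; exact Set.mem_univ i
    | succ nn ih =>
      intro i hi
      have hi1 : i ∈ Set.univ \ ⋃ m : Fin nn, atomOf m := by
        refine ⟨Set.mem_univ i, ?_⟩
        intro hmem
        obtain ⟨m, hm⟩ := Set.mem_iUnion.mp hmem
        exact hi.2 (Set.mem_iUnion.mpr ⟨⟨m.1, by omega⟩, hm⟩)
      have hi2 : i ∉ atomOf nn := by
        intro hmem
        exact hi.2 (Set.mem_iUnion.mpr ⟨⟨nn, by omega⟩, hmem⟩)
      rw [hrest_succ' nn]
      exact ⟨ih hi1, hi2⟩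
  exact triv_mono (hsub n) (Nat.find_spec hterm)

/-- The ultrafilter attached to an atom. -/
noncomputable def atomUF {P : Set I} (h : IsAtomSet f P) : Ultrafilter I :=
  Ultrafilter.ofComplNotMemIff
    { sets := {S | Triv f (P \ S)}
      univ_sets := by
        show Triv f (P \ Set.univ)
        rw [Set.diff_univ]
        exact triv_empty
      sets_of_superset := by
        intro S S' hS hsub
        exact triv_mono (Set.diff_subset_diff_right hsub) hS
      inter_sets := by
        intro S T hS hT
        refine triv_mono ?_ (triv_union hS hT)
        intro i hi
        by_cases hiS : i ∈ S
        · exact Or.inr ⟨hi.1, fun hT' => hi.2 ⟨hiS, hT'⟩⟩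
        · exact Or.inl ⟨hi.1, hiS⟩ }
    (by
      intro S
      constructor
      · intro hc
        show Triv f (P \ S)
        rcases h.2 (P \ S) Set.diff_subset with h1 | h1
        · exact h1
        · exfalso
          apply hc
          show Triv f (P \ Sᶜ)
          refine triv_mono ?_ h1
          intro i hi
          exact ⟨hi.1, fun hm => hm.2 (by simpa using hi.2)⟩
      · intro hS hc
        have hc' : Triv f (P \ Sᶜ) := hc
        apply h.1
        refine triv_mono ?_ (triv_union hS hc')
        intro i hi
        by_cases hiS : i ∈ S
        · exact Or.inr ⟨hi, fun hm => hm hiS⟩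
        · exact Or.inl ⟨hi, hiS⟩)

lemma mem_atomUF {P : Set I} (h : IsAtomSet f P) (S : Set I) :
    S ∈ (atomUF h : Filter I) ↔ Triv f (P \ S) := Iff.rfl

lemma atomUF_cc (hB : Module.rank k B < 2 ^ Cardinal.aleph0)
    (hf : Function.Surjective f) {P : Set I} (h : IsAtomSet f P) :
    CountablyComplete (atomUF h : Filter I) := by
  intro s hs
  rw [mem_atomUF]
  by_contra hW
  rw [Set.diff_iInter] at hW
  set W : Set I := ⋃ j, P \ s j with hWdef
  have hWP : W ⊆ P := by
    intro i hi
    obtain ⟨j, hj⟩ := Set.mem_iUnion.mp hi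
    exact hj.1
  have hPW : Triv f (P \ W) := by
    rcases h.2 W hWP with h1 | h1
    · exact absurd h1 hW
    · exact h1
  have htrivj : ∀ j, Triv f (P \ s j) := fun j => (mem_atomUF h (s j)).mp (hs j)
  set V : ℕ → Set I := fun j =>
    if j = 0 then (P \ s 0) ∪ (P \ W) else (P \ s j) \ (⋃ l ∈ Set.Iio j, P \ s l)
    with hV
  have hVP : ∀ j, V j ⊆ P := by
    intro j i hi
    simp only [hV] at hi
    by_cases hj : j = 0
    · rw [if_pos hj] at hi
      rcases hi with hi | hi
      · exact hi.1
      · exact hi.1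
    · rw [if_neg hj] at hi
      exact hi.1.1
  have htrivV : ∀ j, Triv f (V j) := by
    intro j
    simp only [hV]
    by_cases hj : j = 0
    · rw [if_pos hj]
      subst hj
      exact triv_union (htrivj 0) hPW
    · rw [if_neg hj]
      exact triv_mono Set.diff_subset (htrivj j)
  have hVsub : ∀ j, j ≠ 0 → V j ⊆ (P \ s j) \ (⋃ l ∈ Set.Iio j, P \ s l) := by
    intro j hj
    simp only [hV]
    rw [if_neg hj]
  have hVW : ∀ j, j ≠ 0 → V j ⊆ W := by
    intro j hj i hi
    have := hVsub j hj hi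
    exact Set.mem_iUnion.mpr ⟨j, this.1⟩
  have hdjlt : ∀ m m', m < m' → Disjoint (V m) (V m') := by
    intro m m' hmm
    have hm'0 : m' ≠ 0 := by omega
    rw [Set.disjoint_left]
    intro i him him'
    have hi' := hVsub m' hm'0 him'
    by_cases hm : m = 0
    · subst hm
      simp only [hV] at him
      rcases him with him | him
      · exact hi'.2 (Set.mem_biUnion (show (0:ℕ) ∈ Set.Iio m' by simpa using hmm) him)
      · exact him.2 (hVW m' hm'0 him')
    · have := hVsub m hm him
      exact hi'.2 (Set.mem_biUnion (show m ∈ Set.Iio m' from hmm) this.1)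
  have hdisj : ∀ m m', m ≠ m' → Disjoint (V m) (V m') := by
    intro m m' hne
    rcases Nat.lt_or_ge m m' with h1 | h1
    · exact hdjlt m m' h1
    · exact (hdjlt m' m (by omega)).symm
  have hcovV : ∀ i ∈ P, ∃ j, i ∈ V j := by
    intro i hiP
    by_cases hiW : i ∈ W
    · have hex : ∃ j, i ∈ P \ s j := Set.mem_iUnion.mp hiW
      set j0 := Nat.find hex with hj0
      by_cases hj : j0 = 0
      · refine ⟨0, ?_⟩
        simp only [hV]
        exact Or.inl (hj ▸ Nat.find_spec hex)
      · refine ⟨j0, ?_⟩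
        simp only [hV]
        rw [if_neg hj]
        refine ⟨Nat.find_spec hex, ?_⟩
        intro hmem
        obtain ⟨l, hl, hil⟩ := Set.mem_iUnion₂.mp hmem
        exact Nat.find_min hex hl hil
    · exact ⟨0, by simp only [hV]; exact Or.inr ⟨hiP, hiW⟩⟩
  exact sigma_lemma hB hf P V hdisj hVP hcovV htrivV h.2 h.1

end atoms

end BNAux

/-- Let `k` be an infinite field, `B` a (nonunital,
nonassociative) `k`-algebra with `dim_k B < 2 ^ ℵ₀`, and `f : A = ∏ᵢ Aᵢ → B` a
surjective `k`-algebra homomorphism.  Then the composite `A → B → B/Z(B)`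
factors through the natural map `A → A/U 0 × … × A/U (n-1)` for some finitely
many countably complete ultrafilters `U 0, …, U (n-1)` on `I`. -/
theorem composite_factors_through_countably_complete_ultraproducts
    (k : Type u) [Field k] [Infinite k] {I : Type u} (A : I → Type u)
    [∀ i, NonUnitalNonAssocRing (A i)] [∀ i, Module k (A i)]
    [∀ i, SMulCommClass k (A i) (A i)] [∀ i, IsScalarTower k (A i) (A i)]
    (B : Type u) [NonUnitalNonAssocRing B] [Module k B] [SMulCommClass k B B]
    [IsScalarTower k B B] (hB : Module.rank k B < 2 ^ Cardinal.aleph0)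
    (f : (∀ i, A i) →ₙₐ[k] B) (hf : Function.Surjective f) :
    ∃ (n : ℕ) (U : Fin n → Ultrafilter I),
      (∀ m, CountablyComplete (U m : Filter I)) ∧
      ∃ g : (∀ m, ReducedProduct (U m : Filter I) A) → B ⧸ totalAnnihilator k B,
        (fun a => Submodule.Quotient.mk (f a) : (∀ i, A i) → B ⧸ totalAnnihilator k B)
          = g ∘ fun (a : ∀ i, A i) (m : Fin n) => reducedMk (U m : Filter I) A a := by
  classical
  by_cases htriv : BNAux.Triv f Set.univ
  · refine ⟨0, fun m => m.elim0, fun m => m.elim0, fun _ => 0, ?_⟩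
    funext a
    show Submodule.Quotient.mk (f a) = _
    have hZ : f a ∈ totalAnnihilator k B :=
      htriv a (fun i hi => absurd (Set.mem_univ i) hi)
    simp only [Function.comp]
    exact (Submodule.Quotient.mk_eq_zero _).mpr hZ
  · obtain ⟨n, P, hatoms, hrem⟩ := BNAux.exists_atomic_decomp hB hf htriv
    refine ⟨n, fun m => BNAux.atomUF (hatoms m),
      fun m => BNAux.atomUF_cc hB hf (hatoms m), ?_⟩
    have key : ∀ a b : ∀ i, A i,
        (∀ m : Fin n, reducedMk (BNAux.atomUF (hatoms m) : Filter I) A a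
          = reducedMk (BNAux.atomUF (hatoms m) : Filter I) A b) →
        (Submodule.Quotient.mk (f a) : B ⧸ totalAnnihilator k B)
          = Submodule.Quotient.mk (f b) := by
      intro a b hab
      have hrel : ∀ m : Fin n,
          {i | a i = b i} ∈ (BNAux.atomUF (hatoms m) : Filter I) := by
        intro m
        exact Quotient.exact (hab m)
      have hDtr : BNAux.Triv f {i | a i ≠ b i} := by
        have hsub : {i | a i ≠ b i} ⊆
            (⋃ m : Fin n, (P m \ {i | a i = b i})) ∪ (Set.univ \ ⋃ m, P m) := by
          intro i hi
          by_cases hex : ∃ m, i ∈ P m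
          · obtain ⟨m, hm⟩ := hex
            exact Or.inl (Set.mem_iUnion.mpr ⟨m, ⟨hm, hi⟩⟩)
          · exact Or.inr ⟨Set.mem_univ i,
              fun hmem => hex (Set.mem_iUnion.mp hmem)⟩
        refine BNAux.triv_mono hsub (BNAux.triv_union ?_ hrem)
        exact BNAux.triv_iUnion_fin
          (fun m => (BNAux.mem_atomUF (hatoms m) _).mp (hrel m))
      rw [Submodule.Quotient.eq, ← map_sub]
      refine hDtr (a - b) ?_
      intro i hi
      have hieq : a i = b i := not_not.mp (fun h => hi h)
      show a i - b i = 0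
      rw [hieq, sub_self]
    set h : (∀ i, A i) →
        ∀ m : Fin n, ReducedProduct (BNAux.atomUF (hatoms m) : Filter I) A :=
      fun a m => reducedMk (BNAux.atomUF (hatoms m) : Filter I) A a with hh
    refine ⟨fun q => if hq : ∃ a, h a = q
      then Submodule.Quotient.mk (f hq.choose) else 0, ?_⟩
    funext a
    have hex : ∃ a', h a' = h a := ⟨a, rfl⟩
    show Submodule.Quotient.mk (f a) = _
    simp only [Function.comp]
    rw [dif_pos hex]
    exact (key hex.choose a (fun m => congrFun hex.choose_spec m)).symm
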